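/- Let b₁,…,b_m ∈ C₀(Y₁), c₁,…,c_m ∈ C₀(Y₂), and distinct points y₁,…,y_m ∈ Y₁, z₁,…,z_m ∈ Y₂ with bⱼ(yᵢ) = δᵢⱼ and cₖ(zᵢ) = δᵢₖ. Define ρ₁(b) := ∑ᵢ b(yᵢ) e_{i,i} and ρ₂(c) := U (∑ᵢ c(zᵢ) e_{i,i}) U*, where U is the unitary Fourier matrix m^{−1/2} ∑ ω^{ij} e_{i,j}. Then ∑_{i,j,k=1}^m ω^{k(j−i)} e_{i,j} ⊗ ρ₂(c_k)·ρ₁(b_j) = ∑_{i,j=1}^m e_{i,j} ⊗ e_{i,j} in M_m(ℂ) ⊗ M_m(ℂ). -/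

import Mathlib

open scoped ZeroAtInfty Matrix Kronecker

/-- With `ρ₁(b) = ∑ᵢ b(yᵢ) e_{i,i}` and `ρ₂(c) = U (∑ᵢ c(zᵢ) e_{i,i}) U*` for the Fourier
matrix `U`, and `b_j(y_i) = δ_{ij}`, `c_k(z_i) = δ_{ik}`, one has
`∑_{i,j,k} ω^{k(j−i)} e_{i,j} ⊗ ρ₂(c_k) ρ₁(b_j) = ∑_{i,j} e_{i,j} ⊗ e_{i,j}`. -/
theorem stmt_10 {Y₁ Y₂ : Type*} [TopologicalSpace Y₁] [T2Space Y₁] [LocallyCompactSpace Y₁]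
    [TopologicalSpace Y₂] [T2Space Y₂] [LocallyCompactSpace Y₂]
    {m : ℕ} (hm : 0 < m) (ω : ℂ) (hω : IsPrimitiveRoot ω m)
    (y : Fin m → Y₁) (z : Fin m → Y₂) (hy : Function.Injective y)
    (hz : Function.Injective z)
    (b : Fin m → C₀(Y₁, ℂ)) (c : Fin m → C₀(Y₂, ℂ))
    (hb : ∀ i j, b j (y i) = if i = j then 1 else 0)
    (hc : ∀ i k, c k (z i) = if i = k then 1 else 0)
    (U : Matrix (Fin m) (Fin m) ℂ)
    (hU : U = Matrix.of fun i j : Fin m =>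
      ((Real.sqrt m : ℝ) : ℂ)⁻¹ * ω ^ ((i.1 + 1) * (j.1 + 1)))
    (ρ₁ : C₀(Y₁, ℂ) → Matrix (Fin m) (Fin m) ℂ)
    (hρ₁ : ρ₁ = fun f => ∑ i : Fin m, Matrix.single i i (f (y i)))
    (ρ₂ : C₀(Y₂, ℂ) → Matrix (Fin m) (Fin m) ℂ)
    (hρ₂ : ρ₂ = fun g => U * Matrix.diagonal (fun i => g (z i)) * Uᴴ) :
    ∑ i : Fin m, ∑ j : Fin m, ∑ k : Fin m,
        (ω ^ ((((k.1 : ℤ) + 1)) * ((j.1 : ℤ) - (i.1 : ℤ)))) •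
          (Matrix.single i j (1 : ℂ) ⊗ₖ (ρ₂ (c k) * ρ₁ (b j))) =
      ∑ i : Fin m, ∑ j : Fin m,
        Matrix.single i j (1 : ℂ) ⊗ₖ Matrix.single i j (1 : ℂ) := by
  have hω0 : ω ≠ 0 := hω.ne_zero hm.ne'
  have hconj : (starRingEnd ℂ) ω = ω⁻¹ := (RCLike.inv_eq_conj (hω.norm'_eq_one hm.ne')).symm
  have hs : ((Real.sqrt m : ℝ) : ℂ)⁻¹ * ((Real.sqrt m : ℝ) : ℂ)⁻¹ = (m : ℂ)⁻¹ := by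
    rw [← mul_inv, ← Complex.ofReal_mul, Real.mul_self_sqrt (Nat.cast_nonneg m)]
    norm_num
  -- geometric sum of powers of a primitive root
  have geom : ∀ d : ℤ, (∑ k : Fin m, ω ^ (((k.1 : ℤ) + 1) * d)) =
      if (m : ℤ) ∣ d then (m : ℂ) else 0 := by
    intro d
    have hx : ∀ k : Fin m, ω ^ (((k.1 : ℤ) + 1) * d) = (ω ^ d) ^ (k.1 + 1) := by
      intro k
      rw [mul_comm, zpow_mul]
      norm_cast
    simp only [hx]
    by_cases h : (m : ℤ) ∣ d
    · have h1 : ω ^ d = 1 := (hω.zpow_eq_one_iff_dvd d).mpr h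
      simp [h1, h]
    · have h1 : ω ^ d ≠ 1 := fun hc => h ((hω.zpow_eq_one_iff_dvd d).mp hc)
      have h2 : (ω ^ d) ^ m = 1 := by
        rw [← zpow_natCast, ← zpow_mul, mul_comm, zpow_mul, zpow_natCast, hω.pow_eq_one, one_zpow]
      have h3 : ∑ k : Fin m, (ω ^ d) ^ (k.1 + 1) = (ω ^ d) * ∑ k ∈ Finset.range m, (ω ^ d) ^ k := by
        rw [Finset.mul_sum, Fin.sum_univ_eq_sum_range (fun k => (ω ^ d) ^ (k + 1))]
        exact Finset.sum_congr rfl fun k _ => by ring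
      rw [h3, geom_sum_eq h1, h2]
      simp [h]
  -- entry formula for `ρ₂ (c k) * ρ₁ (b j)`
  have hM : ∀ (k j : Fin m) (p q : Fin m),
      (ρ₂ (c k) * ρ₁ (b j)) p q =
      if q = j then (m : ℂ)⁻¹ *
        ω ^ ((((p.1 : ℤ) + 1) - ((j.1 : ℤ) + 1)) * ((k.1 : ℤ) + 1)) else 0 := by
    intro k j p q
    subst hU hρ₁ hρ₂
    simp only [Matrix.mul_apply, Matrix.diagonal_apply, Matrix.conjTranspose_apply,
      Matrix.of_apply, hc, hb, Matrix.single, Matrix.sum_apply, mul_ite, ite_mul,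
      mul_zero, zero_mul, mul_one, one_mul, Complex.star_def, ite_and, map_mul, map_pow,
      Complex.conj_ofReal, hconj, map_inv₀, Finset.sum_ite_eq, Finset.sum_ite_eq',
      Finset.mem_univ, if_true]
    split
    · rename_i h
      subst h
      have e : ω ^ ((((p.1 : ℤ) + 1) - ((q.1 : ℤ) + 1)) * ((k.1 : ℤ) + 1)) =
          ω ^ ((p.1 + 1) * (k.1 + 1)) * (ω ^ ((q.1 + 1) * (k.1 + 1)))⁻¹ := by
        rw [sub_mul, zpow_sub₀ hω0, ← zpow_natCast ω ((p.1 + 1) * (k.1 + 1)),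
          ← zpow_natCast ω ((q.1 + 1) * (k.1 + 1)), div_eq_mul_inv]
        push_cast
        ring_nf
      rw [e, inv_pow, ← hs]
      ring
    · rfl
  ext ⟨a, p⟩ ⟨b', q⟩
  simp only [Matrix.sum_apply, Matrix.smul_apply, Matrix.kroneckerMap_apply, smul_eq_mul,
    hM, Matrix.single, Matrix.of_apply, mul_ite, ite_mul, mul_zero, zero_mul,
    mul_one, one_mul, ite_and, Finset.sum_ite_irrel, Finset.sum_const_zero,
    Finset.sum_ite_eq, Finset.sum_ite_eq', Finset.mem_univ, if_true]
  by_cases hqb : q = b'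
  · subst hqb
    simp only [if_true]
    have comb : ∀ x : Fin m, ω ^ (((x.1 : ℤ) + 1) * ((q.1 : ℤ) - (a.1 : ℤ))) *
        ((m : ℂ)⁻¹ * ω ^ ((((p.1 : ℤ) + 1) - ((q.1 : ℤ) + 1)) * ((x.1 : ℤ) + 1))) =
        (m : ℂ)⁻¹ * ω ^ (((x.1 : ℤ) + 1) * ((p.1 : ℤ) - (a.1 : ℤ))) := by
      intro x
      rw [mul_left_comm, ← zpow_add₀ hω0]
      congr 1
      ring
    simp only [comb, ← Finset.mul_sum, geom]
    by_cases hpa : p = a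
    · subst hpa
      simp only [sub_self, dvd_zero, if_true, if_pos rfl]
      have : (m : ℂ) ≠ 0 := Nat.cast_ne_zero.mpr hm.ne'
      field_simp
    · have hnd : ¬ (m : ℤ) ∣ ((p.1 : ℤ) - (a.1 : ℤ)) := by
        intro hd
        have hlt := p.isLt
        have hlt' := a.isLt
        have h0 := Int.eq_zero_of_dvd_of_natAbs_lt_natAbs hd (by omega)
        exact hpa (Fin.ext (by omega))
      have hpa' : ¬ p = a := hpa
      simp [hnd, hpa']
  · simp [hqb]
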